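/- arXiv:2408.10494 — 3 statements merged into one kernel-verified Lean document; each statement's English description precedes it below -/
import Mathlib

section
/- Suppose for each ℓ ∈ {1,...,L} there is an injective map σ_ℓ : {1,...,m} → {1,...,N} (local-to-global node index), symmetric positive definite diagonal matrices H^(ℓ) ∈ ℝ^{m×m}, and matrices Q^(ℓ) ∈ ℝ^{m×m} satisfying Q^(ℓ) + (Q^(ℓ))^T = E^(ℓ). Define the assembled N×N matrices H = Σ_ℓ Z_ℓ H^(ℓ) Z_ℓ^T and Q = Σ_ℓ Z_ℓ Q^(ℓ) Z_ℓ^T, where Z_ℓ ∈ ℝ^{N×m} has (Z_ℓ)_{σ_ℓ(i), i} = 1 and zeros elsewhere, and assume every global index lies in the range of some σ_ℓ. Then H is symmetric positive definite diagonal and Q + Q^T = Σ_ℓ Z_ℓ E^(ℓ) Z_ℓ^T; in particular the assembled operator satisfies the SBP property. -/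
open Matrix

/-- Continuous-Galerkin-type assembly preserves the SBP structure: the
assembled norm matrix is diagonal positive definite and the assembled `Q`
satisfies `Q + Qᵀ = Σ_ℓ Z_ℓ E^(ℓ) Z_ℓᵀ`. -/
theorem assembly_preserves_sbp {L m N : ℕ}
    (σ : Fin L → Fin m → Fin N)
    (hσinj : ∀ ℓ, Function.Injective (σ ℓ))
    (hσsurj : ∀ I : Fin N, ∃ ℓ i, σ ℓ i = I)
    (d : Fin L → Fin m → ℝ) (hd : ∀ ℓ i, 0 < d ℓ i)
    (H : Fin L → Matrix (Fin m) (Fin m) ℝ)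
    (hH : ∀ ℓ, H ℓ = Matrix.diagonal (d ℓ))
    (Q E : Fin L → Matrix (Fin m) (Fin m) ℝ)
    (hQ : ∀ ℓ, Q ℓ + (Q ℓ)ᵀ = E ℓ)
    (Z : Fin L → Matrix (Fin N) (Fin m) ℝ)
    (hZ : ∀ ℓ I i, Z ℓ I i = if I = σ ℓ i then 1 else 0) :
    (∃ e : Fin N → ℝ, (∀ I, 0 < e I) ∧
        (∑ ℓ, Z ℓ * H ℓ * (Z ℓ)ᵀ) = Matrix.diagonal e) ∧
    (∑ ℓ, Z ℓ * H ℓ * (Z ℓ)ᵀ).PosDef ∧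
    (∑ ℓ, Z ℓ * Q ℓ * (Z ℓ)ᵀ) + (∑ ℓ, Z ℓ * Q ℓ * (Z ℓ)ᵀ)ᵀ =
      ∑ ℓ, Z ℓ * E ℓ * (Z ℓ)ᵀ := by
  set e : Fin N → ℝ := fun I => ∑ ℓ, ∑ i, if I = σ ℓ i then d ℓ i else 0 with he
  have hepos : ∀ I, 0 < e I := by
    intro I
    obtain ⟨ℓ₀, i₀, hℓ₀⟩ := hσsurj I
    apply Finset.sum_pos' (fun ℓ _ => Finset.sum_nonneg fun i _ => by
      split <;> simp [le_of_lt (hd _ _)])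
    refine ⟨ℓ₀, Finset.mem_univ _, ?_⟩
    apply Finset.sum_pos' (fun i _ => by split <;> simp [le_of_lt (hd _ _)])
    exact ⟨i₀, Finset.mem_univ _, by simp [hℓ₀.symm, hd]⟩
  have hdiag : (∑ ℓ, Z ℓ * H ℓ * (Z ℓ)ᵀ) = Matrix.diagonal e := by
    ext I J
    simp only [Matrix.sum_apply, hH, Matrix.mul_apply, Matrix.diagonal_apply,
      Matrix.transpose_apply, hZ, Finset.sum_ite_eq, Finset.mem_univ, if_true]
    by_cases h : I = J
    · subst h
      simp [he, ite_and]
      congr 1; ext ℓ; congr 1; ext i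
      by_cases hi : I = σ ℓ i <;> simp [hi]
    · simp only [h, if_false]
      apply Finset.sum_eq_zero; intro ℓ _
      apply Finset.sum_eq_zero; intro i _
      by_cases h1 : I = σ ℓ i <;> by_cases h2 : J = σ ℓ i <;>
        simp_all
  refine ⟨⟨e, hepos, hdiag⟩, ?_, ?_⟩
  · rw [hdiag]
    exact Matrix.PosDef.diagonal hepos
  · rw [Matrix.transpose_sum, ← Finset.sum_add_distrib]
    calc ∑ ℓ, (Z ℓ * Q ℓ * (Z ℓ)ᵀ + (Z ℓ * Q ℓ * (Z ℓ)ᵀ)ᵀ)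
        = ∑ ℓ, Z ℓ * (Q ℓ + (Q ℓ)ᵀ) * (Z ℓ)ᵀ := by
          refine Finset.sum_congr rfl fun ℓ _ => ?_
          simp [Matrix.transpose_mul, Matrix.mul_add, Matrix.add_mul, Matrix.mul_assoc]
      _ = ∑ ℓ, Z ℓ * E ℓ * (Z ℓ)ᵀ := by simp [hQ]
end

section
/- With the assembly notation above, suppose additionally that for each ℓ, [H^(ℓ)]⁻¹Q^(ℓ) applied to the restriction of any polynomial P of total degree ≤ p to the local nodes yields the exact nodal values of ∂P/∂ξ. Then D = H⁻¹Q applied to the restriction of P to the global nodes yields the exact nodal values of ∂P/∂ξ at every global node. -/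
open Matrix

/-- If each subdomain operator `(H^(ℓ))⁻¹ Q^(ℓ)` differentiates polynomials of
total degree ≤ p exactly at its local nodes, then the assembled operator
`D = H⁻¹ Q` differentiates them exactly at every global node. -/
theorem assembly_preserves_accuracy {L m N dim p : ℕ}
    (σ : Fin L → Fin m → Fin N)
    (hσinj : ∀ ℓ, Function.Injective (σ ℓ))
    (hσsurj : ∀ I : Fin N, ∃ ℓ i, σ ℓ i = I)
    (X : Fin N → (Fin dim → ℝ)) (k : Fin dim)
    (d : Fin L → Fin m → ℝ) (hd : ∀ ℓ i, 0 < d ℓ i)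
    (H : Fin L → Matrix (Fin m) (Fin m) ℝ)
    (hH : ∀ ℓ, H ℓ = Matrix.diagonal (d ℓ))
    (Q : Fin L → Matrix (Fin m) (Fin m) ℝ)
    (hexact : ∀ P : MvPolynomial (Fin dim) ℝ, P.totalDegree ≤ p → ∀ ℓ i,
      ((H ℓ)⁻¹ * Q ℓ).mulVec (fun j => MvPolynomial.eval (X (σ ℓ j)) P) i =
        MvPolynomial.eval (X (σ ℓ i)) (MvPolynomial.pderiv k P))
    (Z : Fin L → Matrix (Fin N) (Fin m) ℝ)
    (hZ : ∀ ℓ I i, Z ℓ I i = if I = σ ℓ i then 1 else 0) :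
    ∀ P : MvPolynomial (Fin dim) ℝ, P.totalDegree ≤ p → ∀ I : Fin N,
      ((∑ ℓ, Z ℓ * H ℓ * (Z ℓ)ᵀ)⁻¹ * (∑ ℓ, Z ℓ * Q ℓ * (Z ℓ)ᵀ)).mulVec
          (fun J => MvPolynomial.eval (X J) P) I =
        MvPolynomial.eval (X I) (MvPolynomial.pderiv k P) := by
  intro P hP I
  set Dv : Fin N → ℝ := fun I => ∑ ℓ, ∑ i, if I = σ ℓ i then d ℓ i else 0 with hDv
  -- inverse of a positive diagonal matrix
  have hdiaginv : ∀ {n : ℕ} (v : Fin n → ℝ), (∀ i, v i ≠ 0) →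
      (Matrix.diagonal v)⁻¹ = Matrix.diagonal (fun i => (v i)⁻¹) := by
    intro n v hv
    apply Matrix.inv_eq_right_inv
    rw [Matrix.diagonal_mul_diagonal,
      show (fun i => v i * (v i)⁻¹) = fun _ => (1:ℝ) from
        funext fun i => mul_inv_cancel₀ (hv i), Matrix.diagonal_one]
  -- assembled H is diagonal
  have hA : (∑ ℓ, Z ℓ * H ℓ * (Z ℓ)ᵀ) = Matrix.diagonal Dv := by
    ext I J
    rw [Matrix.sum_apply, Matrix.diagonal_apply]
    have hentry : ∀ ℓ, (Z ℓ * H ℓ * (Z ℓ)ᵀ) I J =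
        ∑ i, (if I = σ ℓ i then 1 else 0) * d ℓ i * (if J = σ ℓ i then 1 else 0) := by
      intro ℓ
      rw [hH, Matrix.mul_apply]
      refine Finset.sum_congr rfl fun i _ => ?_
      rw [Matrix.mul_diagonal, Matrix.transpose_apply, hZ, hZ]
    rw [Finset.sum_congr rfl fun ℓ _ => hentry ℓ]
    by_cases hIJ : I = J
    · subst hIJ
      simp only [if_pos rfl, hDv]
      refine Finset.sum_congr rfl fun ℓ _ => Finset.sum_congr rfl fun i _ => ?_
      split_ifs <;> ring
    · rw [if_neg hIJ]
      refine Finset.sum_eq_zero fun ℓ _ => Finset.sum_eq_zero fun i _ => ?_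
      by_cases h1 : I = σ ℓ i
      · by_cases h2 : J = σ ℓ i
        · exact absurd (h1.trans h2.symm) hIJ
        · rw [if_neg h2]; ring
      · rw [if_neg h1]; ring
  -- diagonal entries are positive
  have hDpos : ∀ I, 0 < Dv I := by
    intro I
    obtain ⟨ℓ₀, i₀, hli⟩ := hσsurj I
    refine Finset.sum_pos' (fun ℓ _ => Finset.sum_nonneg fun i _ => ?_)
      ⟨ℓ₀, Finset.mem_univ _, Finset.sum_pos'
        (fun i _ => ?_) ⟨i₀, Finset.mem_univ _, ?_⟩⟩
    · split_ifs with h; exacts [(hd ℓ i).le, le_refl 0]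
    · split_ifs with h; exacts [(hd ℓ₀ i).le, le_refl 0]
    · rw [if_pos hli.symm]; exact hd ℓ₀ i₀
  -- local Q applied to restriction of P
  have hQv : ∀ ℓ, (Q ℓ) *ᵥ (fun j => MvPolynomial.eval (X (σ ℓ j)) P) =
      fun i => d ℓ i * MvPolynomial.eval (X (σ ℓ i)) (MvPolynomial.pderiv k P) := by
    intro ℓ
    funext i
    have h := hexact P hP ℓ i
    rw [← Matrix.mulVec_mulVec, hH, hdiaginv (d ℓ) (fun i => (hd ℓ i).ne'),
      Matrix.mulVec_diagonal] at h
    rw [← h, ← mul_assoc, mul_inv_cancel₀ (hd ℓ i).ne', one_mul]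
  -- assembled Q applied to restriction of P
  have hQsum : (∑ ℓ, Z ℓ * Q ℓ * (Z ℓ)ᵀ) *ᵥ (fun J => MvPolynomial.eval (X J) P) =
      fun I => Dv I * MvPolynomial.eval (X I) (MvPolynomial.pderiv k P) := by
    funext I
    have hsum : ∀ (v : Fin N → ℝ), ((∑ ℓ, Z ℓ * Q ℓ * (Z ℓ)ᵀ) *ᵥ v) I
        = ∑ ℓ, ((Z ℓ * Q ℓ * (Z ℓ)ᵀ) *ᵥ v) I := by
      intro v
      simp only [Matrix.mulVec, dotProduct, Matrix.sum_apply, Finset.sum_mul]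
      exact Finset.sum_comm
    rw [hsum]
    have hterm : ∀ ℓ, ((Z ℓ * Q ℓ * (Z ℓ)ᵀ) *ᵥ (fun J => MvPolynomial.eval (X J) P)) I
        = (∑ i, if I = σ ℓ i then d ℓ i else 0) *
            MvPolynomial.eval (X I) (MvPolynomial.pderiv k P) := by
      intro ℓ
      have hres : (Z ℓ)ᵀ *ᵥ (fun J => MvPolynomial.eval (X J) P)
          = fun j => MvPolynomial.eval (X (σ ℓ j)) P := by
        funext i
        simp only [Matrix.mulVec, dotProduct, Matrix.transpose_apply, hZ,
          ite_mul, one_mul, zero_mul]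
        simp
      rw [← Matrix.mulVec_mulVec, ← Matrix.mulVec_mulVec, hres, hQv]
      simp only [Matrix.mulVec, dotProduct, hZ, ite_mul, one_mul, zero_mul]
      rw [Finset.sum_mul]
      refine Finset.sum_congr rfl fun i _ => ?_
      by_cases h : I = σ ℓ i
      · rw [if_pos h, if_pos h, ← h]
      · rw [if_neg h, if_neg h]; ring
    rw [Finset.sum_congr rfl fun ℓ _ => hterm ℓ, ← Finset.sum_mul]
  -- conclude
  rw [hA, ← Matrix.mulVec_mulVec, hQsum, hdiaginv Dv (fun I => (hDpos I).ne'),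
    Matrix.mulVec_diagonal, ← mul_assoc, inv_mul_cancel₀ (hDpos I).ne', one_mul]
end

section
/- Splitting the reference triangle {(ξ₁,ξ₂) : ξ₁,ξ₂ ≥ −1, ξ₁+ξ₂ ≤ 0} by connecting the centroid to the midpoints of each edge produces three quadrilateral subdomains whose union is the triangle and whose pairwise interiors are disjoint; moreover, each of the three bilinear maps from [-1,1]² onto its quadrilateral subdomain has positive Jacobian determinant throughout [-1,1]². -/
/-- The four bilinear vertex shape functions on `[-1,1]²`. -/
noncomputable def bilinearPsi : Fin 4 → ℝ → ℝ → ℝ :=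
  ![fun a b => (1 - a) * (1 - b) / 4,
    fun a b => (1 + a) * (1 - b) / 4,
    fun a b => (1 + a) * (1 + b) / 4,
    fun a b => (1 - a) * (1 + b) / 4]

/-- Vertices (counterclockwise) of the three quadrilateral subdomains of the
reference triangle: a triangle vertex, the midpoints of its two adjacent
edges, and the centroid `(-1/3, -1/3)`. -/
noncomputable def triQuadVerts : Fin 3 → Fin 4 → ℝ × ℝ :=
  ![![((-1 : ℝ), (-1 : ℝ)), ((0 : ℝ), (-1 : ℝ)), ((-1/3 : ℝ), (-1/3 : ℝ)), ((-1 : ℝ), (0 : ℝ))],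
    ![((1 : ℝ), (-1 : ℝ)), ((0 : ℝ), (0 : ℝ)), ((-1/3 : ℝ), (-1/3 : ℝ)), ((0 : ℝ), (-1 : ℝ))],
    ![((-1 : ℝ), (1 : ℝ)), ((-1 : ℝ), (0 : ℝ)), ((-1/3 : ℝ), (-1/3 : ℝ)), ((0 : ℝ), (0 : ℝ))]]

/-- The bilinear map from the reference square onto the `ℓ`-th quadrilateral
subdomain of the reference triangle. -/
noncomputable def triSplitMap (ℓ : Fin 3) (q : ℝ × ℝ) : ℝ × ℝ :=
  ∑ α : Fin 4, bilinearPsi α q.1 q.2 • triQuadVerts ℓ α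

/- ### Auxiliary material -/

lemma TriSplit.map0 (a b : ℝ) : triSplitMap 0 (a, b) =
    ((-7 + 5*a - b - a*b)/12, (-7 - a + 5*b - a*b)/12) := by
  simp [triSplitMap, bilinearPsi, triQuadVerts, Fin.sum_univ_four, Prod.ext_iff]
  constructor <;> ring

lemma TriSplit.map1 (a b : ℝ) : triSplitMap 1 (a, b) =
    ((1 - 2*a - 2*b + a*b)/6, (-7 + 5*a - b - a*b)/12) := by
  simp [triSplitMap, bilinearPsi, triQuadVerts, Fin.sum_univ_four, Prod.ext_iff]
  constructor <;> ring

lemma TriSplit.map2 (a b : ℝ) : triSplitMap 2 (a, b) =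
    ((-7 - a + 5*b - a*b)/12, (1 - 2*a - 2*b + a*b)/6) := by
  simp [triSplitMap, bilinearPsi, triQuadVerts, Fin.sum_univ_four, Prod.ext_iff]
  constructor <;> ring

open TriSplit

def TriSplit.Q0 : Set (ℝ × ℝ) := {p | -1 ≤ p.1 ∧ -1 ≤ p.2 ∧ p.1 + p.2 ≤ 0 ∧
    2*p.1 + p.2 ≤ -1 ∧ p.1 + 2*p.2 ≤ -1}
def TriSplit.Q1 : Set (ℝ × ℝ) := {p | -1 ≤ p.1 ∧ -1 ≤ p.2 ∧ p.1 + p.2 ≤ 0 ∧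
    -1 ≤ 2*p.1 + p.2 ∧ p.2 ≤ p.1}
def TriSplit.Q2 : Set (ℝ × ℝ) := {p | -1 ≤ p.1 ∧ -1 ≤ p.2 ∧ p.1 + p.2 ≤ 0 ∧
    -1 ≤ p.1 + 2*p.2 ∧ p.1 ≤ p.2}

lemma TriSplit.my_le_sqrt {x D : ℝ} (h : x^2 ≤ D) (_hx : 0 ≤ x) : x ≤ Real.sqrt D := by
  nlinarith [Real.sq_sqrt (le_trans (sq_nonneg x) h), Real.sqrt_nonneg D]

lemma TriSplit.my_sqrt_le {x D : ℝ} (h : D ≤ x^2) (hx : 0 ≤ x) : Real.sqrt D ≤ x := by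
  calc Real.sqrt D ≤ Real.sqrt (x^2) := Real.sqrt_le_sqrt h
  _ = x := Real.sqrt_sq hx

lemma TriSplit.im0 :
    triSplitMap 0 '' (Set.Icc (-1 : ℝ) 1 ×ˢ Set.Icc (-1 : ℝ) 1) = Q0 := by
  ext p
  constructor
  · rintro ⟨⟨a, b⟩, ⟨⟨ha1, ha2⟩, hb1, hb2⟩, rfl⟩
    rw [map0]
    refine ⟨?_, ?_, ?_, ?_, ?_⟩ <;>
      simp only <;>
      nlinarith [mul_nonneg (by linarith : (0:ℝ) ≤ 1-a) (by linarith : (0:ℝ) ≤ 1-b),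
        mul_nonneg (by linarith : (0:ℝ) ≤ 1+a) (by linarith : (0:ℝ) ≤ 1-b),
        mul_nonneg (by linarith : (0:ℝ) ≤ 1+a) (by linarith : (0:ℝ) ≤ 1+b),
        mul_nonneg (by linarith : (0:ℝ) ≤ 1-a) (by linarith : (0:ℝ) ≤ 1+b)]
  · rintro ⟨h1, h2, h3, h4, h5⟩
    obtain ⟨x, y⟩ := p
    simp only at h1 h2 h3 h4 h5
    have hx0 : x ≤ 0 := by linarith
    have hy0 : y ≤ 0 := by linarith
    set d : ℝ := 2*(x - y) with hd
    set r : ℝ := Real.sqrt (d^2 - 12 - 24*(x+y)) with hrdef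
    have hD4 : 4 ≤ d^2 - 12 - 24*(x+y) := by nlinarith [sq_nonneg (x - y)]
    have hD36 : d^2 - 12 - 24*(x+y) ≤ 36 := by
      nlinarith [mul_nonneg (by linarith : (0:ℝ) ≤ x+1) (by linarith : (0:ℝ) ≤ y+1),
        sq_nonneg (x + y + 2)]
    have hr2 : r^2 = d^2 - 12 - 24*(x+y) := Real.sq_sqrt (by linarith)
    have hrlb : 2 ≤ r := my_le_sqrt (by nlinarith) (by norm_num)
    have hrub : r ≤ 6 := my_sqrt_le (by nlinarith) (by norm_num)
    have ha1 : d + 2 ≤ r := by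
      rcases le_or_gt (d + 2) 0 with h | h
      · linarith
      · exact my_le_sqrt (by nlinarith) (by linarith)
    have hb1 : 2 - d ≤ r := by
      rcases le_or_gt (2 - d) 0 with h | h
      · linarith
      · exact my_le_sqrt (by nlinarith) (by linarith)
    have ha2 : r ≤ 6 + d := my_sqrt_le (by nlinarith) (by nlinarith)
    have hb2 : r ≤ 6 - d := my_sqrt_le (by nlinarith) (by nlinarith)
    refine ⟨((4 - r + d)/2, (4 - r - d)/2), ⟨⟨by linarith, by linarith⟩,
      by constructor <;> linarith⟩, ?_⟩
    rw [map0, Prod.ext_iff]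
    constructor
    · show (-7 + 5*((4 - r + d)/2) - (4 - r - d)/2 - ((4 - r + d)/2)*((4 - r - d)/2))/12 = x
      linear_combination (-(1/48 : ℝ)) * hr2
    · show (-7 - (4 - r + d)/2 + 5*((4 - r - d)/2) - ((4 - r + d)/2)*((4 - r - d)/2))/12 = y
      linear_combination (-(1/48 : ℝ)) * hr2

lemma TriSplit.im1 :
    triSplitMap 1 '' (Set.Icc (-1 : ℝ) 1 ×ˢ Set.Icc (-1 : ℝ) 1) = Q1 := by
  ext p
  constructor
  · rintro ⟨⟨a, b⟩, ⟨⟨ha1, ha2⟩, hb1, hb2⟩, rfl⟩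
    rw [map1]
    refine ⟨?_, ?_, ?_, ?_, ?_⟩ <;>
      simp only <;>
      nlinarith [mul_nonneg (by linarith : (0:ℝ) ≤ 1-a) (by linarith : (0:ℝ) ≤ 1-b),
        mul_nonneg (by linarith : (0:ℝ) ≤ 1+a) (by linarith : (0:ℝ) ≤ 1-b),
        mul_nonneg (by linarith : (0:ℝ) ≤ 1+a) (by linarith : (0:ℝ) ≤ 1+b),
        mul_nonneg (by linarith : (0:ℝ) ≤ 1-a) (by linarith : (0:ℝ) ≤ 1+b)]
  · rintro ⟨h1, h2, h3, h4, h5⟩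
    obtain ⟨x, y⟩ := p
    simp only at h1 h2 h3 h4 h5
    have hx13 : -1/3 ≤ x := by linarith
    have hxu : x ≤ 1 := by linarith
    have hy0 : y ≤ 0 := by linarith
    set d : ℝ := 2 + 2*x + 4*y with hd
    set r : ℝ := Real.sqrt (d^2 + 12 + 24*x) with hrdef
    have hD4 : 4 ≤ d^2 + 12 + 24*x := by nlinarith [sq_nonneg d]
    have hD36 : d^2 + 12 + 24*x ≤ 36 := by
      nlinarith [mul_nonneg (by linarith : (0:ℝ) ≤ -2*x-2*y) (by linarith : (0:ℝ) ≤ 2+2*y)]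
    have hr2 : r^2 = d^2 + 12 + 24*x := Real.sq_sqrt (by linarith)
    have hrlb : 2 ≤ r := my_le_sqrt (by nlinarith) (by norm_num)
    have hrub : r ≤ 6 := my_sqrt_le (by nlinarith) (by norm_num)
    have ha1 : d + 2 ≤ r := by
      rcases le_or_gt (d + 2) 0 with h | h
      · linarith
      · exact my_le_sqrt (by nlinarith) (by linarith)
    have hb1 : 2 - d ≤ r := by
      rcases le_or_gt (2 - d) 0 with h | h
      · linarith
      · exact my_le_sqrt (by nlinarith) (by linarith)
    have ha2 : r ≤ 6 + d := my_sqrt_le (by nlinarith) (by nlinarith)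
    have hb2 : r ≤ 6 - d := my_sqrt_le (by nlinarith) (by nlinarith)
    refine ⟨((4 - r + d)/2, (4 - r - d)/2), ⟨⟨by linarith, by linarith⟩,
      by constructor <;> linarith⟩, ?_⟩
    rw [map1, Prod.ext_iff]
    constructor
    · show (1 - 2*((4 - r + d)/2) - 2*((4 - r - d)/2) + ((4 - r + d)/2)*((4 - r - d)/2))/6 = x
      linear_combination (1/24 : ℝ) * hr2
    · show (-7 + 5*((4 - r + d)/2) - (4 - r - d)/2 - ((4 - r + d)/2)*((4 - r - d)/2))/12 = y
      linear_combination (-(1/48 : ℝ)) * hr2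

lemma TriSplit.im2 :
    triSplitMap 2 '' (Set.Icc (-1 : ℝ) 1 ×ˢ Set.Icc (-1 : ℝ) 1) = Q2 := by
  have hsym : ∀ a b : ℝ, triSplitMap 2 (a, b) = Prod.swap (triSplitMap 1 (b, a)) := by
    intro a b
    rw [map1, map2]
    simp only [Prod.swap_prod_mk, Prod.mk.injEq]
    constructor <;> ring
  ext ⟨x, y⟩
  constructor
  · rintro ⟨⟨a, b⟩, ⟨ha, hb⟩, hmap⟩
    have h1 : triSplitMap 1 (b, a) ∈ Q1 := by
      rw [← im1]; exact ⟨(b, a), ⟨hb, ha⟩, rfl⟩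
    rw [hsym] at hmap
    have h2 : triSplitMap 1 (b, a) = (y, x) := by
      have := congrArg Prod.swap hmap
      simpa using this
    rw [h2] at h1
    obtain ⟨k1, k2, k3, k4, k5⟩ := h1
    exact ⟨k2, k1, by dsimp at *; linarith, by dsimp at *; linarith, k5⟩
  · rintro ⟨h1, h2, h3, h4, h5⟩
    have : ((y, x) : ℝ × ℝ) ∈ Q1 := ⟨h2, h1, by dsimp at *; linarith, by dsimp at *; linarith, h5⟩
    rw [← im1] at this
    obtain ⟨⟨a, b⟩, hab, heq⟩ := this
    exact ⟨(b, a), ⟨hab.2, hab.1⟩, by rw [hsym, heq]; rfl⟩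

lemma TriSplit.lineInterior (u v w : ℝ) (hu : u ≠ 0) :
    interior {p : ℝ × ℝ | u*p.1 + v*p.2 = w} = ∅ := by
  rw [Set.eq_empty_iff_forall_notMem]
  intro p hp
  rw [mem_interior_iff_mem_nhds, Metric.mem_nhds_iff] at hp
  obtain ⟨ε, hε, hball⟩ := hp
  have h1 : u*p.1 + v*p.2 = w := hball (Metric.mem_ball_self hε)
  have h2 : (p.1 + ε/2, p.2) ∈ Metric.ball p ε := by
    simp only [Metric.mem_ball, Prod.dist_eq, dist_self]
    rw [Real.dist_eq, show p.1 + ε/2 - p.1 = ε/2 by ring,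
      abs_of_pos (half_pos hε), max_eq_left (by linarith)]
    linarith
  have h3 : u*(p.1 + ε/2) + v*p.2 = w := hball h2
  have : u * (ε/2) = 0 := by linarith [h3, h1]
  rcases mul_eq_zero.1 this with h | h
  · exact hu h
  · linarith

lemma TriSplit.dis01 : interior Q0 ∩ interior Q1 = ∅ := by
  rw [← interior_inter]
  refine Set.eq_empty_of_subset_empty ?_
  rw [← lineInterior 2 1 (-1) (by norm_num)]
  apply interior_mono
  rintro p ⟨h0, h1⟩
  have k0 := h0.2.2.2.1
  have k1 := h1.2.2.2.1
  show 2*p.1 + 1*p.2 = -1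
  linarith

lemma TriSplit.dis02 : interior Q0 ∩ interior Q2 = ∅ := by
  rw [← interior_inter]
  refine Set.eq_empty_of_subset_empty ?_
  rw [← lineInterior 1 2 (-1) (by norm_num)]
  apply interior_mono
  rintro p ⟨h0, h1⟩
  have k0 := h0.2.2.2.2
  have k1 := h1.2.2.2.1
  show 1*p.1 + 2*p.2 = -1
  linarith

lemma TriSplit.dis12 : interior Q1 ∩ interior Q2 = ∅ := by
  rw [← interior_inter]
  refine Set.eq_empty_of_subset_empty ?_
  rw [← lineInterior 1 (-1) 0 (by norm_num)]
  apply interior_mono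
  rintro p ⟨h0, h1⟩
  have k0 := h0.2.2.2.2
  have k1 := h1.2.2.2.2
  show 1*p.1 + (-1)*p.2 = 0
  linarith

lemma TriSplit.deriv_affine (c k t : ℝ) : deriv (fun s => c + k * s) t = k := by
  have h : HasDerivAt (fun s : ℝ => c + k * s) k t := by
    simpa using ((hasDerivAt_id t).const_mul k).const_add c
  exact h.deriv

/-- Splitting the reference triangle by joining the centroid to the edge
midpoints gives three quadrilaterals covering the triangle with pairwise
disjoint interiors, and each bilinear map onto its subdomain has positive
Jacobian determinant on all of `[-1,1]²`. -/
theorem triangle_split_into_three_quadrilaterals :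
    (⋃ ℓ : Fin 3,
        triSplitMap ℓ '' (Set.Icc (-1 : ℝ) 1 ×ˢ Set.Icc (-1 : ℝ) 1)) =
      {p : ℝ × ℝ | -1 ≤ p.1 ∧ -1 ≤ p.2 ∧ p.1 + p.2 ≤ 0} ∧
    (∀ ℓ ℓ' : Fin 3, ℓ ≠ ℓ' →
      interior (triSplitMap ℓ '' (Set.Icc (-1 : ℝ) 1 ×ˢ Set.Icc (-1 : ℝ) 1)) ∩
        interior (triSplitMap ℓ' '' (Set.Icc (-1 : ℝ) 1 ×ˢ Set.Icc (-1 : ℝ) 1)) = ∅) ∧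
    (∀ ℓ : Fin 3, ∀ q ∈ Set.Icc (-1 : ℝ) 1 ×ˢ Set.Icc (-1 : ℝ) 1,
      0 < Matrix.det
        !![deriv (fun a => (triSplitMap ℓ (a, q.2)).1) q.1,
            deriv (fun b => (triSplitMap ℓ (q.1, b)).1) q.2;
          deriv (fun a => (triSplitMap ℓ (a, q.2)).2) q.1,
            deriv (fun b => (triSplitMap ℓ (q.1, b)).2) q.2]) := by
  refine ⟨?_, ?_, ?_⟩
  · -- union
    ext p
    simp only [Set.mem_iUnion, Set.mem_setOf_eq]
    constructor
    · rintro ⟨ℓ, hℓ⟩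
      fin_cases ℓ
      · have h : p ∈ Q0 := by rw [← im0]; exact hℓ
        exact ⟨h.1, h.2.1, h.2.2.1⟩
      · have h : p ∈ Q1 := by rw [← im1]; exact hℓ
        exact ⟨h.1, h.2.1, h.2.2.1⟩
      · have h : p ∈ Q2 := by rw [← im2]; exact hℓ
        exact ⟨h.1, h.2.1, h.2.2.1⟩
    · rintro ⟨h1, h2, h3⟩
      rcases le_total p.2 p.1 with hc | hc
      · rcases le_total (-1 : ℝ) (2*p.1 + p.2) with hd | hd
        · exact ⟨1, by rw [im1]; exact ⟨h1, h2, h3, hd, hc⟩⟩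
        · exact ⟨0, by rw [im0]; exact ⟨h1, h2, h3, hd, by linarith⟩⟩
      · rcases le_total (-1 : ℝ) (p.1 + 2*p.2) with hd | hd
        · exact ⟨2, by rw [im2]; exact ⟨h1, h2, h3, hd, hc⟩⟩
        · exact ⟨0, by rw [im0]; exact ⟨h1, h2, h3, by linarith, hd⟩⟩
  · -- disjoint interiors
    have d01 : interior (triSplitMap 0 '' (Set.Icc (-1 : ℝ) 1 ×ˢ Set.Icc (-1 : ℝ) 1)) ∩
        interior (triSplitMap 1 '' (Set.Icc (-1 : ℝ) 1 ×ˢ Set.Icc (-1 : ℝ) 1)) = ∅ := by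
      rw [im0, im1]; exact dis01
    have d02 : interior (triSplitMap 0 '' (Set.Icc (-1 : ℝ) 1 ×ˢ Set.Icc (-1 : ℝ) 1)) ∩
        interior (triSplitMap 2 '' (Set.Icc (-1 : ℝ) 1 ×ˢ Set.Icc (-1 : ℝ) 1)) = ∅ := by
      rw [im0, im2]; exact dis02
    have d12 : interior (triSplitMap 1 '' (Set.Icc (-1 : ℝ) 1 ×ˢ Set.Icc (-1 : ℝ) 1)) ∩
        interior (triSplitMap 2 '' (Set.Icc (-1 : ℝ) 1 ×ˢ Set.Icc (-1 : ℝ) 1)) = ∅ := by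
      rw [im1, im2]; exact dis12
    have d10 : interior (triSplitMap 1 '' (Set.Icc (-1 : ℝ) 1 ×ˢ Set.Icc (-1 : ℝ) 1)) ∩
        interior (triSplitMap 0 '' (Set.Icc (-1 : ℝ) 1 ×ˢ Set.Icc (-1 : ℝ) 1)) = ∅ := by
      rw [Set.inter_comm]; exact d01
    have d20 : interior (triSplitMap 2 '' (Set.Icc (-1 : ℝ) 1 ×ˢ Set.Icc (-1 : ℝ) 1)) ∩
        interior (triSplitMap 0 '' (Set.Icc (-1 : ℝ) 1 ×ˢ Set.Icc (-1 : ℝ) 1)) = ∅ := by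
      rw [Set.inter_comm]; exact d02
    have d21 : interior (triSplitMap 2 '' (Set.Icc (-1 : ℝ) 1 ×ˢ Set.Icc (-1 : ℝ) 1)) ∩
        interior (triSplitMap 1 '' (Set.Icc (-1 : ℝ) 1 ×ˢ Set.Icc (-1 : ℝ) 1)) = ∅ := by
      rw [Set.inter_comm]; exact d12
    intro ℓ ℓ' hne
    fin_cases ℓ <;> fin_cases ℓ'
    exacts [absurd rfl hne, d01, d02, d10, absurd rfl hne, d12, d20, d21, absurd rfl hne]
  · -- Jacobian
    have jac0 : ∀ (q : ℝ × ℝ), -1 ≤ q.1 → q.1 ≤ 1 → -1 ≤ q.2 → q.2 ≤ 1 →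
        0 < Matrix.det
          !![deriv (fun a => (triSplitMap 0 (a, q.2)).1) q.1,
              deriv (fun b => (triSplitMap 0 (q.1, b)).1) q.2;
            deriv (fun a => (triSplitMap 0 (a, q.2)).2) q.1,
              deriv (fun b => (triSplitMap 0 (q.1, b)).2) q.2] := by
      rintro q ha1 ha2 hb1 hb2
      have e1 : (fun a => (triSplitMap 0 (a, q.2)).1) = fun a => (-7 - q.2)/12 + ((5 - q.2)/12) * a :=
        funext fun a => by rw [map0]; show (-7 + 5*a - q.2 - a*q.2)/12 = _; ring
      have e2 : (fun b => (triSplitMap 0 (q.1, b)).1) = fun b => (-7 + 5*q.1)/12 + ((-1 - q.1)/12) * b :=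
        funext fun b => by rw [map0]; show (-7 + 5*q.1 - b - q.1*b)/12 = _; ring
      have e3 : (fun a => (triSplitMap 0 (a, q.2)).2) = fun a => (-7 + 5*q.2)/12 + ((-1 - q.2)/12) * a :=
        funext fun a => by rw [map0]; show (-7 - a + 5*q.2 - a*q.2)/12 = _; ring
      have e4 : (fun b => (triSplitMap 0 (q.1, b)).2) = fun b => (-7 - q.1)/12 + ((5 - q.1)/12) * b :=
        funext fun b => by rw [map0]; show (-7 - q.1 + 5*b - q.1*b)/12 = _; ring
      rw [e1, e2, e3, e4, deriv_affine, deriv_affine, deriv_affine, deriv_affine,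
        Matrix.det_fin_two_of]
      nlinarith [ha1, ha2, hb1, hb2]
    have jac1 : ∀ (q : ℝ × ℝ), -1 ≤ q.1 → q.1 ≤ 1 → -1 ≤ q.2 → q.2 ≤ 1 →
        0 < Matrix.det
          !![deriv (fun a => (triSplitMap 1 (a, q.2)).1) q.1,
              deriv (fun b => (triSplitMap 1 (q.1, b)).1) q.2;
            deriv (fun a => (triSplitMap 1 (a, q.2)).2) q.1,
              deriv (fun b => (triSplitMap 1 (q.1, b)).2) q.2] := by
      rintro q ha1 ha2 hb1 hb2
      have e1 : (fun a => (triSplitMap 1 (a, q.2)).1) = fun a => (1 - 2*q.2)/6 + ((-2 + q.2)/6) * a :=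
        funext fun a => by rw [map1]; show (1 - 2*a - 2*q.2 + a*q.2)/6 = _; ring
      have e2 : (fun b => (triSplitMap 1 (q.1, b)).1) = fun b => (1 - 2*q.1)/6 + ((-2 + q.1)/6) * b :=
        funext fun b => by rw [map1]; show (1 - 2*q.1 - 2*b + q.1*b)/6 = _; ring
      have e3 : (fun a => (triSplitMap 1 (a, q.2)).2) = fun a => (-7 - q.2)/12 + ((5 - q.2)/12) * a :=
        funext fun a => by rw [map1]; show (-7 + 5*a - q.2 - a*q.2)/12 = _; ring
      have e4 : (fun b => (triSplitMap 1 (q.1, b)).2) = fun b => (-7 + 5*q.1)/12 + ((-1 - q.1)/12) * b :=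
        funext fun b => by rw [map1]; show (-7 + 5*q.1 - b - q.1*b)/12 = _; ring
      rw [e1, e2, e3, e4, deriv_affine, deriv_affine, deriv_affine, deriv_affine,
        Matrix.det_fin_two_of]
      nlinarith [ha1, ha2, hb1, hb2]
    have jac2 : ∀ (q : ℝ × ℝ), -1 ≤ q.1 → q.1 ≤ 1 → -1 ≤ q.2 → q.2 ≤ 1 →
        0 < Matrix.det
          !![deriv (fun a => (triSplitMap 2 (a, q.2)).1) q.1,
              deriv (fun b => (triSplitMap 2 (q.1, b)).1) q.2;
            deriv (fun a => (triSplitMap 2 (a, q.2)).2) q.1,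
              deriv (fun b => (triSplitMap 2 (q.1, b)).2) q.2] := by
      rintro q ha1 ha2 hb1 hb2
      have e1 : (fun a => (triSplitMap 2 (a, q.2)).1) = fun a => (-7 + 5*q.2)/12 + ((-1 - q.2)/12) * a :=
        funext fun a => by rw [map2]; show (-7 - a + 5*q.2 - a*q.2)/12 = _; ring
      have e2 : (fun b => (triSplitMap 2 (q.1, b)).1) = fun b => (-7 - q.1)/12 + ((5 - q.1)/12) * b :=
        funext fun b => by rw [map2]; show (-7 - q.1 + 5*b - q.1*b)/12 = _; ring
      have e3 : (fun a => (triSplitMap 2 (a, q.2)).2) = fun a => (1 - 2*q.2)/6 + ((-2 + q.2)/6) * a :=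
        funext fun a => by rw [map2]; show (1 - 2*a - 2*q.2 + a*q.2)/6 = _; ring
      have e4 : (fun b => (triSplitMap 2 (q.1, b)).2) = fun b => (1 - 2*q.1)/6 + ((-2 + q.1)/6) * b :=
        funext fun b => by rw [map2]; show (1 - 2*q.1 - 2*b + q.1*b)/6 = _; ring
      rw [e1, e2, e3, e4, deriv_affine, deriv_affine, deriv_affine, deriv_affine,
        Matrix.det_fin_two_of]
      nlinarith [ha1, ha2, hb1, hb2]
    rintro ℓ q ⟨⟨ha1, ha2⟩, hb1, hb2⟩
    fin_cases ℓ
    exacts [jac0 q ha1 ha2 hb1 hb2, jac1 q ha1 ha2 hb1 hb2, jac2 q ha1 ha2 hb1 hb2]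
end
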